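/- Let d, s, r, γ > 0 and let α̂ : ℝ → ℝ be continuous, nonpositive, with α̂(z) ≥ -ε·e^{ρz} for all z < 0, for some ε, ρ > 0. Choose λ₀ ∈ (0, ρ) with d·λ₀² - s·λ₀ + r·ε < 0. Then the function φ̲(z) = γ·max{1 - e^{λ₀ z}, 0} satisfies, for all z < 0: d·φ̲''(z) - s·φ̲'(z) + r·φ̲(z)·[γ + α̂(z) - φ̲(z)] ≥ 0. -/
import Mathlib


theorem scalar_subsolution (d s r γ ε ρ ld₀ : ℝ)
    (hd : 0 < d) (hs : 0 < s) (hr : 0 < r) (hγ : 0 < γ) (hε : 0 < ε) (hρ : 0 < ρ)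
    (hld₀ : 0 < ld₀) (hldρ : ld₀ < ρ)
    (hneg : d * ld₀ ^ 2 - s * ld₀ + r * ε < 0)
    (αhat : ℝ → ℝ) (hcont : Continuous αhat) (hnonpos : ∀ z, αhat z ≤ 0)
    (hdecay : ∀ z < 0, αhat z ≥ -ε * Real.exp (ρ * z)) :
    ∀ z < 0,
      d * deriv (deriv (fun z => γ * max (1 - Real.exp (ld₀ * z)) 0)) z
        - s * deriv (fun z => γ * max (1 - Real.exp (ld₀ * z)) 0) z
        + r * (γ * max (1 - Real.exp (ld₀ * z)) 0) *
          (γ + αhat z - γ * max (1 - Real.exp (ld₀ * z)) 0) ≥ 0 := by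
  intro z hz
  have hElt : ∀ y : ℝ, y < 0 → Real.exp (ld₀ * y) < 1 := by
    intro y hy
    have : ld₀ * y < 0 := mul_neg_of_pos_of_neg hld₀ hy
    simpa using Real.exp_lt_one_iff.mpr this
  have hf' : ∀ x : ℝ, HasDerivAt (fun y => γ * (1 - Real.exp (ld₀ * y)))
      (γ * -(Real.exp (ld₀ * x) * ld₀)) x := by
    intro x
    simpa using ((((hasDerivAt_id x).const_mul ld₀).exp).const_sub 1).const_mul γ
  have heq : ∀ x : ℝ, x < 0 →
      (fun y => γ * max (1 - Real.exp (ld₀ * y)) 0) =ᶠ[nhds x]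
      (fun y => γ * (1 - Real.exp (ld₀ * y))) := by
    intro x hx
    filter_upwards [Iio_mem_nhds hx] with y hy
    have := hElt y hy
    rw [max_eq_left (by linarith)]
  have hderiv1 : ∀ x : ℝ, x < 0 →
      deriv (fun y => γ * max (1 - Real.exp (ld₀ * y)) 0) x
        = γ * -(Real.exp (ld₀ * x) * ld₀) := by
    intro x hx
    rw [(heq x hx).deriv_eq, (hf' x).deriv]
  have hEE : deriv (fun y => γ * max (1 - Real.exp (ld₀ * y)) 0) =ᶠ[nhds z]
      (fun x => γ * -(Real.exp (ld₀ * x) * ld₀)) := by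
    filter_upwards [Iio_mem_nhds hz] with y hy
    exact hderiv1 y hy
  have hg' : HasDerivAt (fun x => γ * -(Real.exp (ld₀ * x) * ld₀))
      (γ * -(Real.exp (ld₀ * z) * ld₀ * ld₀)) z := by
    have := ((((hasDerivAt_id z).const_mul ld₀).exp).mul_const ld₀).neg.const_mul γ
    simpa [mul_comm, mul_assoc, mul_left_comm] using this
  have hderiv2 : deriv (deriv (fun y => γ * max (1 - Real.exp (ld₀ * y)) 0)) z
      = γ * -(Real.exp (ld₀ * z) * ld₀ * ld₀) := by
    rw [hEE.deriv_eq, hg'.deriv]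
  rw [hderiv2, hderiv1 z hz]
  have hE1 : Real.exp (ld₀ * z) < 1 := hElt z hz
  have hEpos : 0 < Real.exp (ld₀ * z) := Real.exp_pos _
  have hρE : Real.exp (ρ * z) ≤ Real.exp (ld₀ * z) := by
    apply Real.exp_le_exp.mpr
    nlinarith
  have hρpos : 0 < Real.exp (ρ * z) := Real.exp_pos _
  have hα := hdecay z hz
  have hmax : max (1 - Real.exp (ld₀ * z)) 0 = 1 - Real.exp (ld₀ * z) :=
    max_eq_left (by linarith)
  rw [hmax]
  set E := Real.exp (ld₀ * z)
  set F := Real.exp (ρ * z)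
  have h1 : 0 ≤ 1 - E := by linarith
  have h2 : (1 - E) * αhat z ≥ (1 - E) * (-ε * F) :=
    mul_le_mul_of_nonneg_left hα h1
  have h3 : (1 - E) * (-ε * F) ≥ -(ε * E) := by nlinarith [mul_nonneg hEpos.le (mul_nonneg hε.le hρpos.le), mul_le_mul_of_nonneg_left hρE hε.le]
  have h4 : (1 - E) * αhat z ≥ -(ε * E) := le_trans h3 h2
  have h5 : 0 < γ * E := mul_pos hγ hEpos
  nlinarith [mul_pos hr h5, mul_le_mul_of_nonneg_left h4 (le_of_lt (mul_pos hr hγ)),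
    mul_nonneg (mul_nonneg hr.le (mul_nonneg hγ.le hγ.le)) (mul_nonneg hEpos.le h1),
    mul_pos h5 (neg_pos.mpr hneg)]
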